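/- Let α > 0 and let G₁, G₂ be Borel probability measures on ℝ supported on the open interval (0,1), mutually absolutely continuous, whose Radon–Nikodym derivative dG₁/dG₂ equals the function r ↦ α(1−r)/r, G₂-almost everywhere. Then G₁([0,r]) ≥ G₂([0,r]) for every r ∈ (0,1) (i.e., G₂ first-order stochastically dominates G₁); moreover, if G₁ ≠ G₂, then G₁([0,r]) > G₂([0,r]) for every r strictly between β̲ and β̄, where β̲ and β̄ denote the infimum and supremum of the common support of G₁ and G₂. -/

import Mathlib

open MeasureTheory

/-- The infimum of the (topological) support of a measure on `ℝ`. -/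
noncomputable def suppInf (G : Measure ℝ) : ℝ := sInf {x : ℝ | G (Set.Iic x) ≠ 0}

/-- The supremum of the (topological) support of a measure on `ℝ`. -/
noncomputable def suppSup (G : Measure ℝ) : ℝ := sSup {x : ℝ | G (Set.Ici x) ≠ 0}

section Aux

variable {α : ℝ}

private lemma g_anti (hα : 0 < α) {s t : ℝ} (hs : 0 < s) (hst : s ≤ t) :
    α * ((1 - t) / t) ≤ α * ((1 - s) / s) := by
  have ht : 0 < t := lt_of_lt_of_le hs hst
  refine mul_le_mul_of_nonneg_left ?_ hα.le
  rw [div_le_div_iff₀ ht hs]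
  nlinarith

private lemma g_ge_one (hα : 0 < α) {s : ℝ} (hs : 0 < s) (h : s ≤ α / (1 + α)) :
    1 ≤ α * ((1 - s) / s) := by
  have h1 : (0:ℝ) < 1 + α := by linarith
  have h2 : s * (1 + α) ≤ α := (le_div_iff₀ h1).mp h
  rw [← mul_div_assoc, le_div_iff₀ hs]
  nlinarith

private lemma g_gt_one (hα : 0 < α) {s : ℝ} (hs : 0 < s) (h : s < α / (1 + α)) :
    1 < α * ((1 - s) / s) := by
  have h1 : (0:ℝ) < 1 + α := by linarith
  have h2 : s * (1 + α) < α := (lt_div_iff₀ h1).mp h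
  rw [← mul_div_assoc, lt_div_iff₀ hs]
  nlinarith

private lemma g_le_one (hα : 0 < α) {s : ℝ} (h : α / (1 + α) ≤ s) :
    α * ((1 - s) / s) ≤ 1 := by
  have h1 : (0:ℝ) < 1 + α := by linarith
  have hs : 0 < s := lt_of_lt_of_le (div_pos hα h1) h
  have h2 : α ≤ s * (1 + α) := (div_le_iff₀ h1).mp h
  rw [← mul_div_assoc, div_le_iff₀ hs]
  nlinarith

private lemma g_lt_one (hα : 0 < α) {s : ℝ} (h : α / (1 + α) < s) :
    α * ((1 - s) / s) < 1 := by
  have h1 : (0:ℝ) < 1 + α := by linarith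
  have hs : 0 < s := lt_trans (div_pos hα h1) h
  have h2 : α < s * (1 + α) := (div_lt_iff₀ h1).mp h
  rw [← mul_div_assoc, div_lt_iff₀ hs]
  nlinarith

end Aux

/-- Part (2) of Lemma A.3: `G₂` first-order stochastically dominates `G₁`,
i.e. `G₁([0,r]) ≥ G₂([0,r])` for all `r ∈ (0,1)`; moreover, if `G₁ ≠ G₂` then the
inequality is strict for every `r` strictly between the infimum `β̲` and the
supremum `β̄` of the common support. -/
theorem bayes_fosd
    {α : ℝ} (hα : 0 < α)
    (G₁ G₂ : Measure ℝ) [IsProbabilityMeasure G₁] [IsProbabilityMeasure G₂]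
    (hsupp₁ : G₁ (Set.Ioo (0 : ℝ) 1)ᶜ = 0) (hsupp₂ : G₂ (Set.Ioo (0 : ℝ) 1)ᶜ = 0)
    (hac₁ : G₁ ≪ G₂) (hac₂ : G₂ ≪ G₁)
    (hrn : G₁.rnDeriv G₂ =ᵐ[G₂] fun r => ENNReal.ofReal (α * ((1 - r) / r))) :
    (∀ r ∈ Set.Ioo (0 : ℝ) 1,
        (G₂ (Set.Icc 0 r)).toReal ≤ (G₁ (Set.Icc 0 r)).toReal) ∧
    (G₁ ≠ G₂ →
      ∀ r : ℝ, suppInf G₁ < r → r < suppSup G₁ →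
        (G₂ (Set.Icc 0 r)).toReal < (G₁ (Set.Icc 0 r)).toReal) := by
  classical
  have h1α : (0:ℝ) < 1 + α := by linarith
  set rs : ℝ := α / (1 + α) with hrsdef
  have hrs0 : 0 < rs := div_pos hα h1α
  set f : ℝ → ENNReal := fun s => ENNReal.ofReal (α * ((1 - s) / s)) with hfdef
  have hfm : Measurable f :=
    (measurable_const.mul ((measurable_const.sub measurable_id).div
      measurable_id)).ennreal_ofReal
  have hG1eq : G₂.withDensity f = G₁ := by
    rw [← withDensity_congr_ae hrn, Measure.withDensity_rnDeriv_eq _ _ hac₁]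
  have hint : ∀ s : Set ℝ, MeasurableSet s → G₁ s = ∫⁻ x in s, f x ∂G₂ := by
    intro s hs; rw [← hG1eq, withDensity_apply _ hs]
  have hae₂ : ∀ᵐ x ∂G₂, x ∈ Set.Ioo (0:ℝ) 1 := by
    rw [ae_iff]; exact hsupp₂
  -- complement identity for probability measures supported in (0,1)
  have hIcc_toReal : ∀ (G : Measure ℝ), IsProbabilityMeasure G →
      G (Set.Ioo (0:ℝ) 1)ᶜ = 0 →
      ∀ r : ℝ, 0 ≤ r → (G (Set.Icc 0 r)).toReal = 1 - (G (Set.Ioi r)).toReal := by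
    intro G hGP hsupp r hr
    have hIio : G (Set.Iio 0) = 0 := by
      refine measure_mono_null ?_ hsupp
      intro y hy
      simp only [Set.mem_Iio] at hy
      simp only [Set.mem_compl_iff, Set.mem_Ioo, not_and]
      intro h0; linarith
    have hIci : G (Set.Ici 0) = 1 := by
      refine (prob_compl_eq_zero_iff measurableSet_Ici).mp ?_
      rw [Set.compl_Ici]; exact hIio
    have hdisj : Disjoint (Set.Icc (0:ℝ) r) (Set.Ioi r) := by
      rw [Set.disjoint_left]
      intro y hy hy'
      exact absurd hy.2 (not_le.mpr hy')
    have hsum : G (Set.Icc 0 r) + G (Set.Ioi r) = 1 := by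
      rw [← measure_union hdisj measurableSet_Ioi, Set.Icc_union_Ioi_eq_Ici hr, hIci]
    have h1 : (G (Set.Icc 0 r)).toReal + (G (Set.Ioi r)).toReal = 1 := by
      rw [← ENNReal.toReal_add (measure_ne_top _ _) (measure_ne_top _ _), hsum,
        ENNReal.toReal_one]
    linarith
  -- low case, non-strict
  have low_le : ∀ r : ℝ, r ≤ rs → G₂ (Set.Icc 0 r) ≤ G₁ (Set.Icc 0 r) := by
    intro r hrrs
    rw [hint _ measurableSet_Icc]
    calc G₂ (Set.Icc 0 r) = ∫⁻ _ in Set.Icc 0 r, 1 ∂G₂ := (setLIntegral_one _).symm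
    _ ≤ ∫⁻ x in Set.Icc 0 r, f x ∂G₂ := by
        refine lintegral_mono_ae ?_
        filter_upwards [ae_restrict_mem measurableSet_Icc, ae_restrict_of_ae hae₂]
          with x hx hmem
        rw [hfdef]
        exact (ENNReal.one_le_ofReal).mpr (g_ge_one hα hmem.1 (hx.2.trans hrrs))
  -- high case, non-strict
  have high_le : ∀ r : ℝ, rs ≤ r → G₁ (Set.Ioi r) ≤ G₂ (Set.Ioi r) := by
    intro r hrrs
    rw [hint _ measurableSet_Ioi]
    calc ∫⁻ x in Set.Ioi r, f x ∂G₂ ≤ ∫⁻ _ in Set.Ioi r, 1 ∂G₂ := by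
          refine lintegral_mono_ae ?_
          filter_upwards [ae_restrict_mem measurableSet_Ioi] with x hx
          rw [hfdef]
          exact ENNReal.ofReal_le_one.mpr (g_le_one hα (hrrs.trans hx.le))
    _ = G₂ (Set.Ioi r) := setLIntegral_one _
  -- low case, strict
  have low_lt : ∀ r : ℝ, r ≤ rs → ∀ x : ℝ, 0 < x → x < r →
      G₂ (Set.Iic x ∩ Set.Ioo 0 1) ≠ 0 → G₂ (Set.Icc 0 r) < G₁ (Set.Icc 0 r) := by
    intro r hrrs x hx0 hxr hB0
    set B : Set ℝ := Set.Iic x ∩ Set.Ioo 0 1 with hBdef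
    have hBm : MeasurableSet B := measurableSet_Iic.inter measurableSet_Ioo
    have hBA : B ⊆ Set.Icc 0 r := fun y hy => ⟨hy.2.1.le, hy.1.trans hxr.le⟩
    have hdisj : Disjoint B (Set.Icc 0 r \ B) := Set.disjoint_sdiff_right
    have hunion : B ∪ (Set.Icc 0 r \ B) = Set.Icc 0 r := Set.union_diff_cancel hBA
    set c : ENNReal := ENNReal.ofReal (α * ((1 - x) / x)) with hcdef
    have hc1 : 1 < c := ENNReal.one_lt_ofReal.mpr (g_gt_one hα hx0 (hxr.trans_le hrrs))
    have hBbound : c * G₂ B ≤ ∫⁻ y in B, f y ∂G₂ := by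
      rw [← setLIntegral_const]
      refine lintegral_mono_ae ?_
      filter_upwards [ae_restrict_mem hBm] with y hy
      exact ENNReal.ofReal_le_ofReal (g_anti hα hy.2.1 hy.1)
    have hrest : G₂ (Set.Icc 0 r \ B) ≤ ∫⁻ y in Set.Icc 0 r \ B, f y ∂G₂ := by
      calc G₂ (Set.Icc 0 r \ B) = ∫⁻ _ in Set.Icc 0 r \ B, 1 ∂G₂ :=
            (setLIntegral_one _).symm
      _ ≤ _ := by
          refine lintegral_mono_ae ?_
          filter_upwards [ae_restrict_mem (measurableSet_Icc.diff hBm),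
            ae_restrict_of_ae hae₂] with y hy hmem
          exact (ENNReal.one_le_ofReal).mpr (g_ge_one hα hmem.1 (hy.1.2.trans hrrs))
    have hsplitf : ∫⁻ y in Set.Icc 0 r, f y ∂G₂
        = ∫⁻ y in B, f y ∂G₂ + ∫⁻ y in Set.Icc 0 r \ B, f y ∂G₂ := by
      rw [← lintegral_union (measurableSet_Icc.diff hBm) hdisj, hunion]
    have hsplitm : G₂ (Set.Icc 0 r) = G₂ B + G₂ (Set.Icc 0 r \ B) := by
      rw [← measure_union hdisj (measurableSet_Icc.diff hBm), hunion]
    rw [hint _ measurableSet_Icc, hsplitf, hsplitm]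
    have h1 : G₂ B < c * G₂ B := by
      conv_lhs => rw [← one_mul (G₂ B)]
      simpa only [mul_comm] using ENNReal.mul_lt_mul_right hB0 (measure_ne_top _ _) hc1
    calc G₂ B + G₂ (Set.Icc 0 r \ B) < c * G₂ B + G₂ (Set.Icc 0 r \ B) :=
          ENNReal.add_lt_add_right (measure_ne_top _ _) h1
    _ ≤ _ := add_le_add hBbound hrest
  -- high case, strict
  have high_lt : ∀ r : ℝ, rs ≤ r → ∀ x : ℝ, r < x →
      G₂ (Set.Ici x ∩ Set.Ioo 0 1) ≠ 0 → G₁ (Set.Ioi r) < G₂ (Set.Ioi r) := by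
    intro r hrrs x hrx hB0
    set B : Set ℝ := Set.Ici x ∩ Set.Ioo 0 1 with hBdef
    have hBm : MeasurableSet B := measurableSet_Ici.inter measurableSet_Ioo
    have hBA : B ⊆ Set.Ioi r := fun y hy => lt_of_lt_of_le hrx hy.1
    have hdisj : Disjoint B (Set.Ioi r \ B) := Set.disjoint_sdiff_right
    have hunion : B ∪ (Set.Ioi r \ B) = Set.Ioi r := Set.union_diff_cancel hBA
    set c : ENNReal := ENNReal.ofReal (α * ((1 - x) / x)) with hcdef
    have hx0 : 0 < x := lt_of_le_of_lt (hrs0.le.trans hrrs) hrx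
    have hc1 : c < 1 := ENNReal.ofReal_lt_one.mpr (g_lt_one hα (lt_of_le_of_lt hrrs hrx))
    have hBbound : ∫⁻ y in B, f y ∂G₂ ≤ c * G₂ B := by
      rw [← setLIntegral_const]
      refine lintegral_mono_ae ?_
      filter_upwards [ae_restrict_mem hBm] with y hy
      exact ENNReal.ofReal_le_ofReal (g_anti hα hx0 hy.1)
    have hrest : ∫⁻ y in Set.Ioi r \ B, f y ∂G₂ ≤ G₂ (Set.Ioi r \ B) := by
      calc ∫⁻ y in Set.Ioi r \ B, f y ∂G₂ ≤ ∫⁻ _ in Set.Ioi r \ B, 1 ∂G₂ := by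
            refine lintegral_mono_ae ?_
            filter_upwards [ae_restrict_mem (measurableSet_Ioi.diff hBm)] with y hy
            exact ENNReal.ofReal_le_one.mpr (g_le_one hα (hrrs.trans hy.1.le))
      _ = G₂ (Set.Ioi r \ B) := setLIntegral_one _
    have hsplitf : ∫⁻ y in Set.Ioi r, f y ∂G₂
        = ∫⁻ y in B, f y ∂G₂ + ∫⁻ y in Set.Ioi r \ B, f y ∂G₂ := by
      rw [← lintegral_union (measurableSet_Ioi.diff hBm) hdisj, hunion]
    have hsplitm : G₂ (Set.Ioi r) = G₂ B + G₂ (Set.Ioi r \ B) := by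
      rw [← measure_union hdisj (measurableSet_Ioi.diff hBm), hunion]
    rw [hint _ measurableSet_Ioi, hsplitf, hsplitm]
    have h1 : c * G₂ B < G₂ B := by
      conv_rhs => rw [← one_mul (G₂ B)]
      simpa only [mul_comm] using ENNReal.mul_lt_mul_right hB0 (measure_ne_top _ _) hc1
    calc ∫⁻ y in B, f y ∂G₂ + ∫⁻ y in Set.Ioi r \ B, f y ∂G₂
        ≤ c * G₂ B + G₂ (Set.Ioi r \ B) := add_le_add hBbound hrest
    _ < G₂ B + G₂ (Set.Ioi r \ B) := ENNReal.add_lt_add_right (measure_ne_top _ _) h1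
  constructor
  · -- non-strict part
    rintro r ⟨hr0, hr1⟩
    rcases le_or_gt r rs with hc | hc
    · exact ENNReal.toReal_le_toReal (measure_ne_top _ _) (measure_ne_top _ _)
        |>.mpr (low_le r hc)
    · have h2 := hIcc_toReal G₂ inferInstance hsupp₂ r hr0.le
      have h1 := hIcc_toReal G₁ inferInstance hsupp₁ r hr0.le
      have h3 : (G₁ (Set.Ioi r)).toReal ≤ (G₂ (Set.Ioi r)).toReal :=
        ENNReal.toReal_le_toReal (measure_ne_top _ _) (measure_ne_top _ _)
          |>.mpr (high_le r hc.le)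
      linarith
  · -- strict part
    intro _hne r hβl hβu
    -- facts about the support sets
    have hG₁Ioo : G₁ (Set.Ioo (0:ℝ) 1) = 1 :=
      (prob_compl_eq_zero_iff measurableSet_Ioo).mp hsupp₁
    set S : Set ℝ := {x : ℝ | G₁ (Set.Iic x) ≠ 0} with hSdef
    set S' : Set ℝ := {x : ℝ | G₁ (Set.Ici x) ≠ 0} with hS'def
    have hSpos : ∀ x ∈ S, 0 < x := by
      intro x hx
      by_contra hx0
      push_neg at hx0
      refine hx (measure_mono_null ?_ hsupp₁)
      intro y hy
      simp only [Set.mem_Iic] at hy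
      simp only [Set.mem_compl_iff, Set.mem_Ioo, not_and]
      intro h0; linarith
    have hS'lt : ∀ x ∈ S', x < 1 := by
      intro x hx
      by_contra hx1
      push_neg at hx1
      refine hx (measure_mono_null ?_ hsupp₁)
      intro y hy
      simp only [Set.mem_Ici] at hy
      simp only [Set.mem_compl_iff, Set.mem_Ioo, not_and]
      intro h0; linarith
    have hSne : S.Nonempty := by
      refine ⟨1, ?_⟩
      have h1 : (1:ENNReal) ≤ G₁ (Set.Iic 1) := by
        rw [← hG₁Ioo]
        exact measure_mono fun y hy => hy.2.le
      intro h0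
      rw [h0] at h1
      exact absurd h1 (by simp)
    have hS'ne : S'.Nonempty := by
      refine ⟨0, ?_⟩
      have h1 : (1:ENNReal) ≤ G₁ (Set.Ici 0) := by
        rw [← hG₁Ioo]
        exact measure_mono fun y hy => hy.1.le
      intro h0
      rw [h0] at h1
      exact absurd h1 (by simp)
    have hSbdd : BddBelow S := ⟨0, fun x hx => (hSpos x hx).le⟩
    have hS'bdd : BddAbove S' := ⟨1, fun x hx => (hS'lt x hx).le⟩
    obtain ⟨x, hxS, hxr⟩ := (csInf_lt_iff hSbdd hSne).mp hβl
    obtain ⟨x', hx'S, hrx'⟩ := (lt_csSup_iff hS'bdd hS'ne).mp hβu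
    have hx0 : 0 < x := hSpos x hxS
    have hx'1 : x' < 1 := hS'lt x' hx'S
    -- positivity transferred to G₂
    have hB1 : G₂ (Set.Iic x ∩ Set.Ioo 0 1) ≠ 0 := by
      intro h0
      have h2 : G₂ (Set.Iic x) = 0 := by
        have hsub : Set.Iic x ⊆ (Set.Iic x ∩ Set.Ioo 0 1) ∪ (Set.Ioo (0:ℝ) 1)ᶜ := by
          intro y hy
          by_cases h : y ∈ Set.Ioo (0:ℝ) 1
          · exact Or.inl ⟨hy, h⟩
          · exact Or.inr h
        have := (measure_mono hsub).trans (measure_union_le (μ := G₂) _ _)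
        rw [h0, hsupp₂] at this
        simpa using this
      exact hxS (hac₁ h2)
    have hB2 : G₂ (Set.Ici x' ∩ Set.Ioo 0 1) ≠ 0 := by
      intro h0
      have h2 : G₂ (Set.Ici x') = 0 := by
        have hsub : Set.Ici x' ⊆ (Set.Ici x' ∩ Set.Ioo 0 1) ∪ (Set.Ioo (0:ℝ) 1)ᶜ := by
          intro y hy
          by_cases h : y ∈ Set.Ioo (0:ℝ) 1
          · exact Or.inl ⟨hy, h⟩
          · exact Or.inr h
        have := (measure_mono hsub).trans (measure_union_le (μ := G₂) _ _)
        rw [h0, hsupp₂] at this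
        simpa using this
      exact hx'S (hac₁ h2)
    have hr0 : 0 < r := hx0.trans hxr
    rcases le_or_gt r rs with hc | hc
    · exact ENNReal.toReal_lt_toReal (measure_ne_top _ _) (measure_ne_top _ _)
        |>.mpr (low_lt r hc x hx0 hxr hB1)
    · have h2 := hIcc_toReal G₂ inferInstance hsupp₂ r hr0.le
      have h1 := hIcc_toReal G₁ inferInstance hsupp₁ r hr0.le
      have h3 : (G₁ (Set.Ioi r)).toReal < (G₂ (Set.Ioi r)).toReal :=
        ENNReal.toReal_lt_toReal (measure_ne_top _ _) (measure_ne_top _ _)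
          |>.mpr (high_lt r hc.le x' hrx' hB2)
      linarith
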